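/- Let k ≥ 3 be an integer and set N = (4^k − 1)/3. Let h₁,…,h_N be nonzero vectors in 𝔽₄^k that are pairwise linearly independent and such that every nonzero vector of 𝔽₄^k is a scalar multiple of some h_i (i.e., the h_i represent all points of the projective space PG(k−1,4), as the columns of a generator matrix of the quaternary simplex code). Let m₁,…,m_N be nonnegative integers with ∑_{i=1}^{N} m_i = n, and let α be a positive integer. If for every nonzero x ∈ 𝔽₄^k one has ∑_{i : x·h_i ≠ 0} m_i ≥ α (where x·h_i = ∑_{j=1}^{k} x_j (h_i)_j ), then for every i ∈ {1,…,N}: 4α − 3n ≤ m_i and 3·4^{k−2}·m_i ≤ 3·4^{k−2}·n − (4^{k−1} − 1)·α. -/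

import Mathlib

open scoped Classical

noncomputable section

/-- The finite field with four elements. -/
abbrev F4 := GaloisField 2 2

/-- The (Hamming) weight of a vector over `F4`: the number of nonzero coordinates. -/
def wt {n : ℕ} (x : Fin n → F4) : ℕ :=
  (Finset.univ.filter (fun i => x i ≠ 0)).card

/-- Hermitian inner product on `F4^n`: `∑ i, x i * (conj (y i))` with `conj z = z^2`. -/
def hermInner {n : ℕ} (x y : Fin n → F4) : F4 :=
  ∑ i, x i * (y i) ^ 2

/-- Membership in the Hermitian dual `C^{⊥H}` of a code `C`. -/
def inHermDual {n : ℕ} (C : Submodule F4 (Fin n → F4)) (x : Fin n → F4) : Prop :=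
  ∀ y ∈ C, hermInner x y = 0

/-- `C` is Hermitian LCD: `C ∩ C^{⊥H} = {0}`. -/
def IsHermLCD {n : ℕ} (C : Submodule F4 (Fin n → F4)) : Prop :=
  ∀ x ∈ C, inHermDual C x → x = 0

/-- `C` has minimum weight (exactly) `d`. -/
def minWtIs {n : ℕ} (C : Submodule F4 (Fin n → F4)) (d : ℕ) : Prop :=
  (∃ x ∈ C, x ≠ 0 ∧ wt x = d) ∧ ∀ x ∈ C, x ≠ 0 → d ≤ wt x

/-- `C` is a quaternary Hermitian LCD `[n,k,d]` code. -/
def IsHermLCDCode (n k d : ℕ) (C : Submodule F4 (Fin n → F4)) : Prop :=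
  Module.finrank F4 C = k ∧ IsHermLCD C ∧ minWtIs C d

/-- `d₄(n,k) = d`: the largest minimum weight among quaternary Hermitian LCD `[n,k]` codes
is `d`. -/
def d4Is (n k d : ℕ) : Prop :=
  (∃ C : Submodule F4 (Fin n → F4), IsHermLCDCode n k d C) ∧
  (∀ C : Submodule F4 (Fin n → F4), Module.finrank F4 C = k → IsHermLCD C →
    ∃ x ∈ C, x ≠ 0 ∧ wt x ≤ d)

end

noncomputable section

instance : Fintype F4 := Fintype.ofFinite F4

section Aux

open Finset Function

/-- bundled dot-product functional `x ↦ ∑ j, x j * v j`. -/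
def dotL {k : ℕ} (v : Fin k → F4) : (Fin k → F4) →ₗ[F4] F4 where
  toFun x := ∑ j, x j * v j
  map_add' x y := by simp [add_mul, Finset.sum_add_distrib]
  map_smul' c x := by simp [Finset.mul_sum, mul_assoc]

lemma dotL_apply {k : ℕ} (v x : Fin k → F4) : dotL v x = ∑ j, x j * v j := rfl

lemma dotL_single {k : ℕ} (v : Fin k → F4) (t : Fin k) (a : F4) :
    dotL v (Pi.single t a) = a * v t := by
  rw [dotL_apply, Finset.sum_eq_single t]
  · simp
  · intro j _ hj; simp [Pi.single_eq_of_ne hj]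
  · simp

lemma dotL_surj {k : ℕ} {v : Fin k → F4} (hv : v ≠ 0) : Surjective (dotL v) := by
  obtain ⟨t, ht⟩ : ∃ t, v t ≠ 0 := by
    by_contra hc
    push_neg at hc
    exact hv (funext fun t => hc t)
  intro c
  refine ⟨Pi.single t (c * (v t)⁻¹), ?_⟩
  rw [dotL_single]
  field_simp

variable {V W : Type*} [AddCommGroup V] [Module F4 V] [Fintype V]
  [AddCommGroup W] [Module F4 W] [Fintype W]

lemma card_fiber_mul (L : V →ₗ[F4] W) (hL : Surjective L) (w : W) :
    (Finset.univ.filter fun x => L x = w).card * Fintype.card W = Fintype.card V := by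
  have hfd : FiniteDimensional F4 V := Module.Finite.of_finite
  have hfdW : FiniteDimensional F4 W := Module.Finite.of_finite
  obtain ⟨x₀, hx₀⟩ := hL w
  have hcard : (Finset.univ.filter fun x => L x = w).card
      = Fintype.card (LinearMap.ker L) := by
    have e : {x // L x = w} ≃ LinearMap.ker L :=
      { toFun := fun x => ⟨x.1 - x₀, by simp [LinearMap.mem_ker, map_sub, x.2, hx₀]⟩
        invFun := fun y => ⟨x₀ + y.1, by
          have := LinearMap.mem_ker.mp y.2
          simp [map_add, hx₀, this]⟩
        left_inv := fun x => by simp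
        right_inv := fun y => by simp }
    rw [← Fintype.card_subtype, Fintype.card_congr e]
  rw [hcard]
  have h2 := LinearMap.finrank_range_add_finrank_ker L
  rw [LinearMap.range_eq_top.mpr hL, finrank_top] at h2
  rw [Module.card_eq_pow_finrank (K := F4) (V := ↥(LinearMap.ker L)),
    Module.card_eq_pow_finrank (K := F4) (V := W), Module.card_eq_pow_finrank (K := F4) (V := V), ← pow_add]
  congr 1
  omega

lemma card_preimage_mul (L : V →ₗ[F4] W) (hL : Surjective L) (S : Finset W) :
    (Finset.univ.filter fun x => L x ∈ S).card * Fintype.card W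
      = S.card * Fintype.card V := by
  have h1 : (Finset.univ.filter fun x => L x ∈ S).card
      = ∑ w ∈ S, ((Finset.univ.filter fun x => L x ∈ S).filter fun x => L x = w).card :=
    Finset.card_eq_sum_card_fiberwise (fun x hx => (Finset.mem_filter.mp hx).2)
  have h2 : ∀ w ∈ S, ((Finset.univ.filter fun x => L x ∈ S).filter fun x => L x = w)
      = (Finset.univ.filter fun x => L x = w) := by
    intro w hw
    ext x
    simp only [Finset.mem_filter, Finset.mem_univ, true_and]
    exact ⟨fun hx => hx.2, fun hx => ⟨hx ▸ hw, hx⟩⟩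
  have h3 : ∑ w ∈ S, ((Finset.univ.filter fun x => L x ∈ S).filter fun x => L x = w).card
      = ∑ w ∈ S, (Finset.univ.filter fun x => L x = w).card :=
    Finset.sum_congr rfl (fun w hw => by rw [h2 w hw])
  rw [h1, h3, Finset.sum_mul,
    Finset.sum_congr rfl (fun w (_ : w ∈ S) => card_fiber_mul L hL w),
    Finset.sum_const, smul_eq_mul]

end Aux
end

section Aux2
open Finset Function

lemma card_F4 : Fintype.card F4 = 4 := by
  rw [← Nat.card_eq_fintype_card, GaloisField.card 2 2 (by norm_num)]
  norm_num

lemma prod_surj {k : ℕ} {u v : Fin k → F4} (hu : u ≠ 0)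
    (hind : ∀ c : F4, v ≠ c • u) :
    Surjective ⇑((dotL u).prod (dotL v)) := by
  by_contra hns
  set L := (dotL u).prod (dotL v) with hL
  have hrange : LinearMap.range L < ⊤ :=
    lt_top_iff_ne_top.mpr (fun hc => hns (LinearMap.range_eq_top.mp hc))
  have hfr : Module.finrank F4 (LinearMap.range L) < Module.finrank F4 (F4 × F4) :=
    Submodule.finrank_lt hrange.ne
  have hdim2 : Module.finrank F4 (F4 × F4) = 2 := by
    rw [Module.finrank_prod, Module.finrank_self]
  haveI hprin : (LinearMap.range L).IsPrincipal :=
    (Submodule.finrank_le_one_iff_isPrincipal _).mp (by omega)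
  set g := Submodule.IsPrincipal.generator (LinearMap.range L) with hgdef
  have hmem : ∀ x : Fin k → F4, ∃ c : F4, (dotL u x, dotL v x) = c • g := by
    intro x
    have : (dotL u x, dotL v x) ∈ LinearMap.range L := ⟨x, rfl⟩
    exact (Submodule.IsPrincipal.mem_iff_eq_smul_generator _).mp this
  obtain ⟨t, ht⟩ : ∃ t, u t ≠ 0 := by
    by_contra hc; push_neg at hc; exact hu (funext fun t => hc t)
  obtain ⟨c₁, hc₁⟩ := hmem (Pi.single t ((u t)⁻¹))
  have hg1 : g.1 ≠ 0 := by
    intro h0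
    have := congrArg Prod.fst hc₁
    rw [dotL_single] at this
    simp [h0, inv_mul_cancel₀ ht] at this
  set b := g.1⁻¹ * g.2 with hb
  have key : ∀ x : Fin k → F4, dotL v x = b * dotL u x := by
    intro x
    obtain ⟨c, hc⟩ := hmem x
    have h1 : dotL u x = c * g.1 := congrArg Prod.fst hc
    have h2 : dotL v x = c * g.2 := congrArg Prod.snd hc
    have hcval : c = dotL u x * g.1⁻¹ := by
      field_simp [h1]
      exact h1.symm
    rw [h2, hcval, hb]; ring
  refine hind b (funext fun s => ?_)
  have := key (Pi.single s 1)
  rw [dotL_single, dotL_single, one_mul, one_mul] at this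
  simpa using this

lemma card_preimage_mul' {V : Type*} [AddCommGroup V] [Module F4 V] [Fintype V]
    {W : Type*} [AddCommGroup W] [Module F4 W] [Fintype W]
    (L : V →ₗ[F4] W) (hL : Surjective L) (S : Finset W) (q : V → Prop)
    (hq : ∀ x, q x ↔ L x ∈ S) :
    (Finset.univ.filter q).card * Fintype.card W = S.card * Fintype.card V := by
  have he : Finset.univ.filter q = Finset.univ.filter (fun x => L x ∈ S) :=
    Finset.filter_congr (fun x _ => hq x)
  rw [he]
  exact card_preimage_mul L hL S

end Aux2

/-- bounds on the column multiplicities of a quaternary `[n,k]` code of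
minimum weight at least `α`, via the simplex code / projective points. -/
theorem stmt5 (k : ℕ) (hk : 3 ≤ k) (n α : ℕ) (hα : 1 ≤ α)
    (h : Fin ((4 ^ k - 1) / 3) → (Fin k → F4))
    (hnz : ∀ i, h i ≠ 0)
    (hpli : ∀ i j, i ≠ j → ∀ c : F4, h i ≠ c • h j)
    (hcover : ∀ x : Fin k → F4, x ≠ 0 → ∃ i, ∃ c : F4, x = c • h i)
    (m : Fin ((4 ^ k - 1) / 3) → ℕ) (hm : ∑ i, m i = n)
    (hwt : ∀ x : Fin k → F4, x ≠ 0 →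
      α ≤ ∑ i ∈ Finset.univ.filter (fun i => ∑ j, x j * h i j ≠ 0), m i) :
    ∀ i, 4 * (α : ℤ) - 3 * n ≤ (m i : ℤ) ∧
      3 * 4 ^ (k - 2) * (m i : ℤ) ≤ 3 * 4 ^ (k - 2) * (n : ℤ) - (4 ^ (k - 1) - 1) * α := by
  classical
  intro i
  obtain ⟨p, hp⟩ : ∃ p, k = p + 2 := ⟨k - 2, by omega⟩
  set P : ℕ := 4 ^ p with hPdef
  have hP1 : 1 ≤ P := Nat.one_le_pow _ _ (by norm_num)
  have hcardV : Fintype.card (Fin k → F4) = P * 16 := by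
    rw [Fintype.card_fun, card_F4, Fintype.card_fin, hp, pow_add]
    norm_num
    exact hPdef.symm
  have hcardW2 : Fintype.card (F4 × F4) = 16 := by
    rw [Fintype.card_prod, card_F4]
  have hSne : (Finset.univ.filter fun c : F4 => c ≠ 0).card = 3 := by
    rw [Finset.filter_ne', Finset.card_erase_of_mem (Finset.mem_univ _),
      Finset.card_univ, card_F4]
  -- count of x with dotL (h i) x ≠ 0
  have hA : (Finset.univ.filter fun x => dotL (h i) x ≠ 0).card = 12 * P := by
    have hc := card_preimage_mul' (dotL (h i)) (dotL_surj (hnz i))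
      (Finset.univ.filter fun c : F4 => c ≠ 0) (fun x => dotL (h i) x ≠ 0)
      (fun x => by simp)
    rw [card_F4, hSne, hcardV] at hc
    have h2 : 3 * (P * 16) = (12 * P) * 4 := by ring
    have hcl := Nat.eq_of_mul_eq_mul_right (by norm_num : 0 < 4) (hc.trans h2)
    exact (congrArg Finset.card (Finset.filter_congr_decidable Finset.univ _ _).symm).trans hcl
  -- count of x with dotL (h i) x ≠ 0 ∧ dotL (h j) x ≠ 0, for j ≠ i
  have hB : ∀ j, j ≠ i →
      (Finset.univ.filter fun x => dotL (h i) x ≠ 0 ∧ dotL (h j) x ≠ 0).card = 9 * P := by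
    intro j hj
    have hsurj : Function.Surjective ⇑((dotL (h i)).prod (dotL (h j))) :=
      prod_surj (hnz i) (fun c => hpli j i hj c)
    have hc := card_preimage_mul' ((dotL (h i)).prod (dotL (h j))) hsurj
      ((Finset.univ.filter fun c : F4 => c ≠ 0) ×ˢ (Finset.univ.filter fun c : F4 => c ≠ 0))
      (fun x => dotL (h i) x ≠ 0 ∧ dotL (h j) x ≠ 0)
      (fun x => by simp [Finset.mem_product, LinearMap.prod_apply])
    rw [hcardW2, hcardV, Finset.card_product, hSne] at hc
    have h2 : 3 * 3 * (P * 16) = (9 * P) * 16 := by ring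
    have hcl := Nat.eq_of_mul_eq_mul_right (by norm_num : 0 < 16) (hc.trans h2)
    exact (congrArg Finset.card (Finset.filter_congr_decidable Finset.univ _ _).symm).trans hcl
  -- count of x with dotL (h i) x = 0 ∧ dotL (h j) x ≠ 0, for j ≠ i
  have hC : ∀ j, j ≠ i →
      (Finset.univ.filter fun x => dotL (h i) x = 0 ∧ dotL (h j) x ≠ 0).card = 3 * P := by
    intro j hj
    have hsurj : Function.Surjective ⇑((dotL (h i)).prod (dotL (h j))) :=
      prod_surj (hnz i) (fun c => hpli j i hj c)
    have hc := card_preimage_mul' ((dotL (h i)).prod (dotL (h j))) hsurj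
      (({0} : Finset F4) ×ˢ (Finset.univ.filter fun c : F4 => c ≠ 0))
      (fun x => dotL (h i) x = 0 ∧ dotL (h j) x ≠ 0)
      (fun x => by
        simp only [Finset.mem_product, Finset.mem_singleton, Finset.mem_filter,
          Finset.mem_univ, true_and, LinearMap.prod_apply, Function.prod_apply])
    rw [hcardW2, hcardV, Finset.card_product, hSne, Finset.card_singleton] at hc
    have h2 : 1 * 3 * (P * 16) = (3 * P) * 16 := by ring
    have hcl := Nat.eq_of_mul_eq_mul_right (by norm_num : 0 < 16) (hc.trans h2)
    exact (congrArg Finset.card (Finset.filter_congr_decidable Finset.univ _ _).symm).trans hcl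
  -- count of x with dotL (h i) x = 0
  have hZ : (Finset.univ.filter fun x => dotL (h i) x = 0).card = 4 * P := by
    have hc := card_preimage_mul' (dotL (h i)) (dotL_surj (hnz i)) ({0} : Finset F4)
      (fun x => dotL (h i) x = 0) (fun x => by simp)
    rw [card_F4, hcardV, Finset.card_singleton] at hc
    have h2 : 1 * (P * 16) = (4 * P) * 4 := by ring
    have hcl := Nat.eq_of_mul_eq_mul_right (by norm_num : 0 < 4) (hc.trans h2)
    exact (congrArg Finset.card (Finset.filter_congr_decidable Finset.univ _ _).symm).trans hcl
  set t : ℕ := ∑ j ∈ Finset.univ.erase i, m j with ht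
  have hn : m i + t = n := by
    rw [ht, Finset.add_sum_erase _ m (Finset.mem_univ i)]
    exact hm
  -- weight lower bound for members of a set of nonzero vectors
  have hwt' : ∀ x : Fin k → F4, x ≠ 0 →
      α ≤ ∑ j ∈ Finset.univ.filter (fun j => dotL (h j) x ≠ 0), m j := by
    intro x hx
    exact hwt x hx
  -- generic double counting
  have swap : ∀ s : Finset (Fin k → F4),
      ∑ x ∈ s, ∑ j ∈ Finset.univ.filter (fun j => dotL (h j) x ≠ 0), m j
        = ∑ j, (s.filter fun x => dotL (h j) x ≠ 0).card * m j := by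
    intro s
    simp_rw [Finset.sum_filter]
    rw [Finset.sum_comm]
    refine Finset.sum_congr rfl fun j _ => ?_
    rw [← Finset.sum_filter, Finset.sum_const, smul_eq_mul]
  constructor
  · -- lower bound
    set A : Finset (Fin k → F4) := Finset.univ.filter fun x => dotL (h i) x ≠ 0 with hAdef
    have key1 : A.card * α ≤ ∑ x ∈ A, ∑ j ∈ Finset.univ.filter
        (fun j => dotL (h j) x ≠ 0), m j := by
      calc A.card * α = ∑ _x ∈ A, α := by rw [Finset.sum_const, smul_eq_mul]
        _ ≤ _ := Finset.sum_le_sum fun x hx => hwt' x (by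
            intro h0
            rw [hAdef, Finset.mem_filter] at hx
            exact hx.2 (by rw [h0, map_zero]))
    rw [swap A] at key1
    have hcards : ∀ j, (A.filter fun x => dotL (h j) x ≠ 0).card
        = if j = i then 12 * P else 9 * P := by
      intro j
      rw [hAdef, Finset.filter_filter]
      by_cases hj : j = i
      · subst hj
        rw [if_pos rfl, ← hA]
        congr 1
        apply Finset.filter_congr
        intro x _
        simp
      · rw [if_neg hj]
        exact hB j hj
    rw [Finset.sum_congr rfl (fun j (_ : j ∈ Finset.univ) => by rw [hcards j]),
      ← Finset.add_sum_erase _ _ (Finset.mem_univ i), if_pos rfl] at key1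
    have hrest : ∑ j ∈ Finset.univ.erase i, (if j = i then 12 * P else 9 * P) * m j
        = 9 * P * t := by
      rw [ht, Finset.mul_sum]
      refine Finset.sum_congr rfl fun j hj => ?_
      rw [if_neg (Finset.mem_erase.mp hj).1]
    rw [hrest, hA] at key1
    -- key1 : 12 * P * α ≤ 12 * P * m i + 9 * P * t
    have h' : P * (12 * α) ≤ P * (12 * m i + 9 * t) := by
      calc P * (12 * α) = 12 * P * α := by ring
        _ ≤ 12 * P * m i + 9 * P * t := key1
        _ = P * (12 * m i + 9 * t) := by ring
    have h'' := Nat.le_of_mul_le_mul_left h' (by omega : 0 < P)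
    omega
  · -- upper bound
    set Z' : Finset (Fin k → F4) :=
      Finset.univ.filter fun x => dotL (h i) x = 0 ∧ x ≠ 0 with hZ'def
    have hZ'card : Z'.card + 1 = 4 * P := by
      have hzerase : Z' = (Finset.univ.filter fun x => dotL (h i) x = 0).erase 0 := by
        ext x
        rw [hZ'def, Finset.mem_erase, Finset.mem_filter, Finset.mem_filter]
        tauto
      have h0mem : (0 : Fin k → F4) ∈ Finset.univ.filter fun x => dotL (h i) x = 0 := by
        rw [Finset.mem_filter]
        exact ⟨Finset.mem_univ _, map_zero _⟩
      have := Finset.card_erase_of_mem h0mem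
      rw [hzerase, this, hZ]
      omega
    have key2 : Z'.card * α ≤ ∑ x ∈ Z', ∑ j ∈ Finset.univ.filter
        (fun j => dotL (h j) x ≠ 0), m j := by
      calc Z'.card * α = ∑ _x ∈ Z', α := by rw [Finset.sum_const, smul_eq_mul]
        _ ≤ _ := Finset.sum_le_sum fun x hx => hwt' x
            ((Finset.mem_filter.mp (hZ'def ▸ hx)).2.2)
    rw [swap Z'] at key2
    have hcards2 : ∀ j, (Z'.filter fun x => dotL (h j) x ≠ 0).card
        = if j = i then 0 else 3 * P := by
      intro j
      rw [hZ'def, Finset.filter_filter]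
      by_cases hj : j = i
      · subst hj
        rw [if_pos rfl, Finset.card_eq_zero]
        apply Finset.filter_false_of_mem
        intro x _
        tauto
      · rw [if_neg hj, ← hC j hj]
        congr 1
        apply Finset.filter_congr
        intro x _
        constructor
        · rintro ⟨⟨h1, _⟩, h2⟩; exact ⟨h1, h2⟩
        · rintro ⟨h1, h2⟩
          refine ⟨⟨h1, ?_⟩, h2⟩
          intro h0
          exact h2 (by rw [h0, map_zero])
    rw [Finset.sum_congr rfl (fun j (_ : j ∈ Finset.univ) => by rw [hcards2 j]),
      ← Finset.add_sum_erase _ _ (Finset.mem_univ i), if_pos rfl] at key2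
    have hrest2 : ∑ j ∈ Finset.univ.erase i, (if j = i then 0 else 3 * P) * m j
        = 3 * P * t := by
      rw [ht, Finset.mul_sum]
      refine Finset.sum_congr rfl fun j hj => ?_
      rw [if_neg (Finset.mem_erase.mp hj).1]
    rw [hrest2, zero_mul, zero_add] at key2
    -- key2 : Z'.card * α ≤ 3 * P * t
    have e1 : k - 2 = p := by omega
    have e2 : k - 1 = p + 1 := by omega
    rw [e1, e2]
    have hPc : ((4 : ℤ) ^ p) = (P : ℤ) := by
      rw [hPdef]; push_cast; ring
    rw [hPc, pow_succ, hPc]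
    have hkey2 : ((Z'.card : ℤ)) * α ≤ 3 * (P : ℤ) * t := by exact_mod_cast key2
    have hZc : (Z'.card : ℤ) + 1 = 4 * (P : ℤ) := by exact_mod_cast hZ'card
    have hnz' : (m i : ℤ) + (t : ℤ) = (n : ℤ) := by exact_mod_cast hn
    nlinarith [hkey2, hZc, hnz']
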